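/- arXiv:1510.04093 — 2 statements merged into one kernel-verified Lean document; each statement's English description precedes it below -/
import Mathlib

section
/- Let A = {|a_i⟩} and B = {|b_j⟩} be orthonormal bases of ℂ^d. For every index k, the density matrix ρ = |b_k⟩⟨b_k| satisfies 1 − F(p_ρ^B, q_ρ^{A→B})² = 1 − Σ_{i=1}^d |⟨a_i|b_k⟩|⁴; consequently Q_F(A→B) ≥ max_{1≤k≤d} (1 − Σ_{i=1}^d |⟨a_i|b_k⟩|⁴). -/
open Matrix
open scoped BigOperators ComplexOrder

/-- The inner product ⟨x|y⟩ on ℂ^d. -/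
noncomputable def qinner {d : ℕ} (x y : Fin d → ℂ) : ℂ := star x ⬝ᵥ y

/-- `a` is an orthonormal basis of ℂ^d (d orthonormal vectors). -/
def IsONB {d : ℕ} (a : Fin d → (Fin d → ℂ)) : Prop :=
  ∀ i j, qinner (a i) (a j) = if i = j then 1 else 0

/-- Measurement distribution p_ρ^B(j) = ⟨b_j|ρ|b_j⟩. -/
noncomputable def probB {d : ℕ} (ρ : Matrix (Fin d) (Fin d) ℂ)
    (b : Fin d → (Fin d → ℂ)) (j : Fin d) : ℝ :=
  (qinner (b j) (ρ *ᵥ b j)).re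

/-- Distribution of a B-measurement after a non-selective A-measurement:
q_ρ^{A→B}(j) = Σ_i ⟨a_i|ρ|a_i⟩ |⟨a_i|b_j⟩|². -/
noncomputable def probAB {d : ℕ} (ρ : Matrix (Fin d) (Fin d) ℂ)
    (a b : Fin d → (Fin d → ℂ)) (j : Fin d) : ℝ :=
  ∑ i, probB ρ a i * ‖qinner (a i) (b j)‖ ^ 2

/-- Tsallis entropy of order α. -/
noncomputable def tsallis {d : ℕ} (α : ℝ) (p : Fin d → ℝ) : ℝ :=
  (1 / (1 - α)) * ((∑ j, p j ^ α) - 1)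

/-- Rank-one projector |v⟩⟨v|. -/
noncomputable def proj {d : ℕ} (v : Fin d → ℂ) : Matrix (Fin d) (Fin d) ℂ :=
  vecMulVec v (star v)


/-- The set of values 1 − F(p_ρ^B, q_ρ^{A→B})² over density matrices ρ;
`Q_F(A→B)` is its supremum. -/
noncomputable def QFset {d : ℕ} (a b : Fin d → (Fin d → ℂ)) : Set ℝ :=
  {x | ∃ ρ : Matrix (Fin d) (Fin d) ℂ, ρ.PosSemidef ∧ ρ.trace = 1 ∧
    x = 1 - (∑ j, Real.sqrt (probB ρ b j * probAB ρ a b j)) ^ 2}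

lemma star_qinner {d : ℕ} (v x : Fin d → ℂ) : star (qinner v x) = qinner x v := by
  simp [qinner, dotProduct, Finset.sum_comm, mul_comm]

lemma norm_qinner_symm {d : ℕ} (v x : Fin d → ℂ) : ‖qinner v x‖ = ‖qinner x v‖ := by
  rw [← star_qinner, norm_star]

lemma qinner_proj {d : ℕ} (v x : Fin d → ℂ) :
    qinner x (proj v *ᵥ x) = star (qinner v x) * qinner v x := by
  rw [star_qinner]
  simp only [qinner, proj, dotProduct, mulVec, vecMulVec_apply, Pi.star_apply,
    Finset.mul_sum, Finset.sum_mul]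
  rw [Finset.sum_comm]
  exact Finset.sum_congr rfl fun j _ => Finset.sum_congr rfl fun i _ => by ring

lemma probB_proj {d : ℕ} (v : Fin d → ℂ) (c : Fin d → (Fin d → ℂ)) (j : Fin d) :
    probB (proj v) c j = ‖qinner v (c j)‖ ^ 2 := by
  unfold probB
  rw [qinner_proj]
  rw [show star (qinner v (c j)) = (starRingEnd ℂ) (qinner v (c j)) from rfl,
    Complex.conj_mul', ← Complex.ofReal_pow, Complex.ofReal_re]

lemma posSemidef_proj {d : ℕ} (v : Fin d → ℂ) : (proj v).PosSemidef := by
  rw [posSemidef_iff_dotProduct_mulVec]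
  constructor
  · ext i j
    simp [proj, conjTranspose_apply, vecMulVec_apply, mul_comm]
  · intro x
    have h : star x ⬝ᵥ (proj v *ᵥ x) = star (qinner v x) * qinner v x := qinner_proj v x
    rw [h]
    exact star_mul_self_nonneg _

lemma trace_proj {d : ℕ} (v : Fin d → ℂ) : (proj v).trace = qinner v v := by
  simp [proj, trace, diag, vecMulVec_apply, qinner, dotProduct, mul_comm]

theorem QF_ge_max_eigen {d : ℕ} (hd : 0 < d) (a b : Fin d → (Fin d → ℂ))
    (ha : IsONB a) (hb : IsONB b) :
    (∀ k : Fin d,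
      1 - (∑ j, Real.sqrt (probB (proj (b k)) b j * probAB (proj (b k)) a b j)) ^ 2
        = 1 - ∑ i, ‖qinner (a i) (b k)‖ ^ 4) ∧
    (⨆ k : Fin d, (1 - ∑ i, ‖qinner (a i) (b k)‖ ^ 4)) ≤ sSup (QFset a b) := by
  have hp : ∀ k j : Fin d, probB (proj (b k)) b j = if j = k then 1 else 0 := by
    intro k j
    rw [probB_proj, hb k j]
    by_cases h : j = k
    · simp [h]
    · simp [h, Ne.symm h]
  have hq : ∀ k : Fin d, probAB (proj (b k)) a b k = ∑ i, ‖qinner (a i) (b k)‖ ^ 4 := by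
    intro k
    unfold probAB
    refine Finset.sum_congr rfl fun i _ => ?_
    rw [probB_proj, norm_qinner_symm (b k) (a i)]
    ring
  have hqnn : ∀ k : Fin d, 0 ≤ probAB (proj (b k)) a b k := by
    intro k
    rw [hq k]
    exact Finset.sum_nonneg fun i _ => by positivity
  have key : ∀ k : Fin d,
      1 - (∑ j, Real.sqrt (probB (proj (b k)) b j * probAB (proj (b k)) a b j)) ^ 2
        = 1 - ∑ i, ‖qinner (a i) (b k)‖ ^ 4 := by
    intro k
    have hsum : (∑ j, Real.sqrt (probB (proj (b k)) b j * probAB (proj (b k)) a b j))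
        = Real.sqrt (probAB (proj (b k)) a b k) := by
      rw [Finset.sum_eq_single k]
      · rw [hp k k, if_pos rfl, one_mul]
      · intro j _ hj
        rw [hp k j, if_neg hj, zero_mul, Real.sqrt_zero]
      · intro h; exact absurd (Finset.mem_univ k) h
    rw [hsum, Real.sq_sqrt (hqnn k), hq k]
  refine ⟨key, ?_⟩
  have hbdd : BddAbove (QFset a b) := by
    refine ⟨1, fun x hx => ?_⟩
    obtain ⟨ρ, _, _, hxe⟩ := hx
    rw [hxe]
    nlinarith [sq_nonneg (∑ j, Real.sqrt (probB ρ b j * probAB ρ a b j))]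
  haveI : Nonempty (Fin d) := Fin.pos_iff_nonempty.mp hd
  refine ciSup_le fun k => le_csSup hbdd ?_
  exact ⟨proj (b k), posSemidef_proj (b k), by rw [trace_proj, hb k k, if_pos rfl],
    (key k).symm⟩
end

section
/- Let d > d_c ≥ 0 be integers and let A = {|a_i⟩} and B = {|b_j⟩} be orthonormal bases of ℂ^d satisfying |⟨a_i|b_j⟩| = δ_{ij} whenever i ≤ d_c or j ≤ d_c, and |⟨a_i|b_j⟩| = 1/√(d−d_c) whenever both i > d_c and j > d_c. Then Q_F(A,B) = (1/2)(1 − 1/(d−d_c)). -/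
open Matrix
open scoped BigOperators ComplexOrder

/- ### Auxiliary lemmas -/

lemma qinner_conj {d : ℕ} (x y : Fin d → ℂ) : qinner y x = star (qinner x y) := by
  simp only [qinner, dotProduct, star_sum, star_mul', star_star, Pi.star_apply]
  exact Finset.sum_congr rfl fun i _ => mul_comm _ _

lemma ONB_complete {d : ℕ} {b : Fin d → Fin d → ℂ} (hb : IsONB b) (k l : Fin d) :
    ∑ j, b j k * star (b j l) = if k = l then 1 else 0 := by
  let M : Matrix (Fin d) (Fin d) ℂ := Matrix.of fun j k => star (b j k)
  have h1 : M * Mᴴ = 1 := by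
    ext i j
    simpa [M, Matrix.of_apply, Matrix.mul_apply, Matrix.conjTranspose_apply, Matrix.one_apply, qinner,
      dotProduct] using hb i j
  have h2 : Mᴴ * M = 1 := mul_eq_one_comm.mp h1
  have h3 := congrFun (congrFun h2 k) l
  simpa [M, Matrix.of_apply, Matrix.mul_apply, Matrix.conjTranspose_apply, Matrix.one_apply] using h3

lemma sum_probB {d : ℕ} {b : Fin d → Fin d → ℂ} (hb : IsONB b)
    (ρ : Matrix (Fin d) (Fin d) ℂ) (ht : ρ.trace = 1) :
    ∑ j, probB ρ b j = 1 := by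
  have key : ∑ j, qinner (b j) (ρ *ᵥ b j) = ρ.trace := by
    calc ∑ j, qinner (b j) (ρ *ᵥ b j)
        = ∑ k, ∑ l, ρ k l * ∑ j, b j l * star (b j k) := by
          simp only [qinner, dotProduct, mulVec, Pi.star_apply, Finset.mul_sum, Finset.sum_mul]
          rw [Finset.sum_comm]
          refine Finset.sum_congr rfl fun k _ => ?_
          rw [Finset.sum_comm]
          refine Finset.sum_congr rfl fun l _ => Finset.sum_congr rfl fun j _ => by ring
      _ = ρ.trace := by
          simp only [Matrix.trace, Matrix.diag]
          refine Finset.sum_congr rfl fun k _ => ?_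
          have hc : ∀ l, ∑ j, b j l * (starRingEnd ℂ) (b j k) = if l = k then (1:ℂ) else 0 :=
            fun l => ONB_complete hb l k
          simp [hc]
  have h1 : (∑ j, qinner (b j) (ρ *ᵥ b j)).re = 1 := by rw [key, ht]; simp
  rw [← h1, Complex.re_sum]
  rfl

lemma probB_nonneg {d : ℕ} {ρ : Matrix (Fin d) (Fin d) ℂ} (hρ : ρ.PosSemidef)
    (b : Fin d → (Fin d → ℂ)) (j : Fin d) : 0 ≤ probB ρ b j := by
  have h := hρ.dotProduct_mulVec_nonneg (b j)
  exact (Complex.le_def.mp h).1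

lemma probB_smul_eq {d : ℕ} (ρ : Matrix (Fin d) (Fin d) ℂ) (x : Fin d → ℂ) (c : ℂ)
    (hc : ‖c‖ = 1) (b : Fin d → (Fin d → ℂ)) (j : Fin d) (hx : b j = c • x) :
    probB ρ b j = (qinner x (ρ *ᵥ x)).re := by
  have h : qinner (b j) (ρ *ᵥ b j) = (star c * c) * qinner x (ρ *ᵥ x) := by
    rw [hx, mulVec_smul]
    simp only [qinner, dotProduct, Pi.smul_apply, Pi.star_apply, smul_eq_mul, star_mul',
      Finset.mul_sum]
    exact Finset.sum_congr rfl fun k _ => by ring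
  rw [probB, h]
  have hcc : star c * c = 1 := by
    have h2 : (Complex.normSq c : ℂ) = 1 := by
      rw [← Complex.sq_norm, hc]
      norm_num
    rw [Complex.star_def, ← Complex.normSq_eq_conj_mul_self, h2]
  rw [hcc, one_mul]

lemma probA_eq_probB_small {d dc : ℕ} {a b : Fin d → (Fin d → ℂ)}
    (hb : IsONB b)
    (hcomm : ∀ i j : Fin d, (i.val < dc ∨ j.val < dc) →
      ‖qinner (a i) (b j)‖ = if i = j then 1 else 0)
    (ρ : Matrix (Fin d) (Fin d) ℂ) (j : Fin d) (hj : j.val < dc) :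
    probB ρ a j = probB ρ b j := by
  set c : ℂ := qinner (b j) (a j) with hc
  have hcn : ‖c‖ = 1 := by
    rw [hc, qinner_conj, norm_star]
    simpa using hcomm j j (Or.inl hj)
  have hx : a j = c • b j := by
    funext l
    have expand : a j l = ∑ k, qinner (b k) (a j) * b k l := by
      simp only [qinner, dotProduct, Pi.star_apply, Finset.sum_mul]
      rw [Finset.sum_comm]
      have h : ∀ m : Fin d, (∑ k, star (b k m) * a j m * b k l)
          = a j m * ∑ k, b k l * star (b k m) := by
        intro m
        rw [Finset.mul_sum]
        exact Finset.sum_congr rfl fun k _ => by ring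
      rw [Finset.sum_congr rfl fun m _ => h m]
      have hc' : ∀ m : Fin d, ∑ k, b k l * (starRingEnd ℂ) (b k m) = if l = m then (1:ℂ) else 0 :=
        fun m => ONB_complete hb l m
      simp [hc']
    rw [expand]
    rw [Finset.sum_eq_single j]
    · rfl
    · intro k _ hk
      have hn : ‖qinner (a j) (b k)‖ = 0 := by
        rw [hcomm j k (Or.inl hj), if_neg (fun h => hk h.symm)]
      have hz : qinner (a j) (b k) = 0 := norm_eq_zero.mp hn
      rw [qinner_conj, hz, star_zero, zero_mul]
    · intro h; exact absurd (Finset.mem_univ j) h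
  exact probB_smul_eq ρ (b j) c hcn a j hx

lemma QF_upper_bound {d dc : ℕ} (hdc : dc < d) (a b : Fin d → (Fin d → ℂ))
    (ha : IsONB a) (hb : IsONB b)
    (hcomm : ∀ i j : Fin d, (i.val < dc ∨ j.val < dc) →
      ‖qinner (a i) (b j)‖ = if i = j then 1 else 0)
    (hmub : ∀ i j : Fin d, dc ≤ i.val → dc ≤ j.val →
      ‖qinner (a i) (b j)‖ = 1 / Real.sqrt ((d : ℝ) - dc)) :
    ∀ x ∈ QFset a b, x ≤ 1 - 1 / ((d : ℝ) - dc) := by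
  rintro x ⟨ρ, hρ, htr, rfl⟩
  set m : ℝ := (d : ℝ) - dc with hm
  have hm1 : 1 ≤ m := by
    have h : (dc : ℝ) + 1 ≤ d := by exact_mod_cast hdc
    simp only [hm]; linarith
  have hm0 : 0 < m := lt_of_lt_of_le one_pos hm1
  have hsm1 : 1 ≤ Real.sqrt m := by
    rw [show (1:ℝ) = Real.sqrt 1 from Real.sqrt_one.symm]
    exact Real.sqrt_le_sqrt hm1
  have hsm0 : 0 < Real.sqrt m := lt_of_lt_of_le one_pos hsm1
  have hpnn : ∀ j, 0 ≤ probB ρ b j := probB_nonneg hρ b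
  have hrnn : ∀ i, 0 ≤ probB ρ a i := probB_nonneg hρ a
  have hsum : ∑ j, probB ρ b j = 1 := sum_probB hb ρ htr
  have hsuma : ∑ i, probB ρ a i = 1 := sum_probB ha ρ htr
  have hsmall : ∀ j : Fin d, (j : ℕ) < dc → probB ρ a j = probB ρ b j :=
    fun j hj => probA_eq_probB_small hb hcomm ρ j hj
  set s1 : Finset (Fin d) := Finset.filter (fun i : Fin d => (i : ℕ) < dc) Finset.univ with hs1
  set s2 : Finset (Fin d) := Finset.filter (fun i : Fin d => ¬ (i : ℕ) < dc) Finset.univ with hs2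
  have hfilter : ∀ f : Fin d → ℝ, ∑ i ∈ s1, f i + ∑ i ∈ s2, f i = ∑ i, f i := fun f =>
    Finset.sum_filter_add_sum_filter_not Finset.univ _ f
  set P : ℝ := ∑ j ∈ s2, probB ρ b j with hP
  have hPnn : 0 ≤ P := Finset.sum_nonneg fun j _ => hpnn j
  have hsplit : ∑ j ∈ s1, probB ρ b j + P = 1 := by rw [hP, hfilter]; exact hsum
  have hP1 : P ≤ 1 := by
    have h := Finset.sum_nonneg (fun j (_ : j ∈ s1) => hpnn j); linarith
  have hs1small : ∀ i ∈ s1, (i : ℕ) < dc := fun i hi => by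
    simpa [hs1] using hi
  have hs2big : ∀ i ∈ s2, dc ≤ (i : ℕ) := fun i hi => by
    have := by simpa [hs2] using hi
    omega
  have hR : ∑ i ∈ s2, probB ρ a i = P := by
    have h1 : ∑ i ∈ s1, probB ρ a i + ∑ i ∈ s2, probB ρ a i = 1 := by
      rw [hfilter]; exact hsuma
    have h2 : ∑ i ∈ s1, probB ρ a i = ∑ i ∈ s1, probB ρ b i :=
      Finset.sum_congr rfl fun i hi => hsmall i (hs1small i hi)
    rw [h2] at h1
    linarith
  have hq_small : ∀ j : Fin d, (j : ℕ) < dc → probAB ρ a b j = probB ρ b j := by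
    intro j hj
    rw [probAB, Finset.sum_eq_single j]
    · rw [hcomm j j (Or.inr hj), if_pos rfl, hsmall j hj]; norm_num
    · intro i _ hij
      rw [hcomm i j (Or.inr hj), if_neg hij]; norm_num
    · intro h; exact absurd (Finset.mem_univ j) h
  have hq_big : ∀ j : Fin d, dc ≤ (j : ℕ) → probAB ρ a b j = P / m := by
    intro j hj
    rw [probAB, ← hfilter (fun i => probB ρ a i * ‖qinner (a i) (b j)‖ ^ 2)]
    have z1 : ∑ i ∈ s1, probB ρ a i * ‖qinner (a i) (b j)‖ ^ 2 = 0 := by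
      apply Finset.sum_eq_zero; intro i hi
      have hi' := hs1small i hi
      have hij : i ≠ j := fun h => by rw [h] at hi'; omega
      rw [hcomm i j (Or.inl hi'), if_neg hij]; ring
    have z2 : ∑ i ∈ s2, probB ρ a i * ‖qinner (a i) (b j)‖ ^ 2 = P / m := by
      have h : ∀ i ∈ s2, probB ρ a i * ‖qinner (a i) (b j)‖ ^ 2
          = probB ρ a i * (1 / m) := by
        intro i hi
        rw [hmub i j (hs2big i hi) hj, div_pow, one_pow, Real.sq_sqrt hm0.le]
      rw [Finset.sum_congr rfl h, ← Finset.sum_mul, hR]; ring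
    rw [z1, z2, zero_add]
  set S : ℝ := ∑ j, Real.sqrt (probB ρ b j * probAB ρ a b j) with hS
  have hS0 : 0 ≤ S := Finset.sum_nonneg fun j _ => Real.sqrt_nonneg _
  have hSsplit : S = (1 - P) + (∑ j ∈ s2, Real.sqrt (probB ρ b j)) * Real.sqrt (P / m) := by
    rw [hS, ← hfilter (fun j => Real.sqrt (probB ρ b j * probAB ρ a b j))]
    have e1 : ∑ j ∈ s1, Real.sqrt (probB ρ b j * probAB ρ a b j)
        = ∑ j ∈ s1, probB ρ b j := by
      refine Finset.sum_congr rfl fun j hj => ?_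
      rw [hq_small j (hs1small j hj), Real.sqrt_mul_self (hpnn j)]
    have e2 : ∑ j ∈ s2, Real.sqrt (probB ρ b j * probAB ρ a b j)
        = (∑ j ∈ s2, Real.sqrt (probB ρ b j)) * Real.sqrt (P / m) := by
      rw [Finset.sum_mul]
      refine Finset.sum_congr rfl fun j hj => ?_
      rw [hq_big j (hs2big j hj), Real.sqrt_mul (hpnn j)]
    rw [e1, e2]
    linarith [hsplit]
  have hbig : Real.sqrt P ≤ ∑ j ∈ s2, Real.sqrt (probB ρ b j) := by
    have h1 : P ≤ (∑ j ∈ s2, Real.sqrt (probB ρ b j)) ^ 2 := by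
      have h2 := Finset.sum_sq_le_sq_sum_of_nonneg
        (s := s2) (f := fun j => Real.sqrt (probB ρ b j))
        (fun j _ => Real.sqrt_nonneg _)
      calc P = ∑ j ∈ s2, Real.sqrt (probB ρ b j) ^ 2 :=
            Finset.sum_congr rfl fun j _ => (Real.sq_sqrt (hpnn j)).symm
        _ ≤ _ := h2
    calc Real.sqrt P ≤ Real.sqrt ((∑ j ∈ s2, Real.sqrt (probB ρ b j)) ^ 2) :=
          Real.sqrt_le_sqrt h1
      _ = _ := Real.sqrt_sq (Finset.sum_nonneg fun j _ => Real.sqrt_nonneg _)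
  have hPm : Real.sqrt P * Real.sqrt (P / m) = P / Real.sqrt m := by
    rw [Real.sqrt_div hPnn, ← mul_div_assoc, Real.mul_self_sqrt hPnn]
  have hSge : 1 - P + P / Real.sqrt m ≤ S := by
    rw [hSsplit, ← hPm]
    have := mul_le_mul_of_nonneg_right hbig (Real.sqrt_nonneg (P / m))
    linarith
  have hSge' : 1 / Real.sqrt m ≤ S := by
    have hkey : 0 ≤ (1 - P) * (Real.sqrt m - 1) :=
      mul_nonneg (by linarith) (by linarith)
    have hPc : P / Real.sqrt m * Real.sqrt m = P := div_mul_cancel₀ P (ne_of_gt hsm0)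
    have h2 : 1 / Real.sqrt m ≤ 1 - P + P / Real.sqrt m := by
      rw [div_le_iff₀ hsm0]
      nlinarith [hkey, hPc]
    linarith
  have hSsq : 1 / m ≤ S ^ 2 := by
    have h1 : (1 / Real.sqrt m) ^ 2 ≤ S ^ 2 := by
      apply pow_le_pow_left₀ (by positivity) hSge'
    calc 1 / m = (1 / Real.sqrt m) ^ 2 := by
          rw [div_pow, one_pow, Real.sq_sqrt hm0.le]
      _ ≤ S ^ 2 := h1
  linarith

lemma QF_witness {d dc : ℕ} (hdc : dc < d) (a b : Fin d → (Fin d → ℂ))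
    (ha : IsONB a) (hb : IsONB b)
    (hcomm : ∀ i j : Fin d, (i.val < dc ∨ j.val < dc) →
      ‖qinner (a i) (b j)‖ = if i = j then 1 else 0)
    (hmub : ∀ i j : Fin d, dc ≤ i.val → dc ≤ j.val →
      ‖qinner (a i) (b j)‖ = 1 / Real.sqrt ((d : ℝ) - dc)) :
    1 - 1 / ((d : ℝ) - dc) ∈ QFset a b := by
  set m : ℝ := (d : ℝ) - dc with hm
  have hm1 : 1 ≤ m := by
    have h : (dc : ℝ) + 1 ≤ d := by exact_mod_cast hdc
    simp only [hm]; linarith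
  have hm0 : 0 < m := lt_of_lt_of_le one_pos hm1
  set j0 : Fin d := ⟨dc, hdc⟩ with hj0
  set M : Matrix (Fin d) (Fin d) ℂ := Matrix.of (fun k l => b j0 k * star (b j0 l)) with hM
  have hMv : ∀ x : Fin d → ℂ, ∀ k, (M *ᵥ x) k = b j0 k * qinner (b j0) x := by
    intro x k
    simp only [hM, mulVec, dotProduct, Matrix.of_apply, qinner, Pi.star_apply, Finset.mul_sum]
    exact Finset.sum_congr rfl fun l _ => by ring
  have hfact : ∀ x y : Fin d → ℂ, qinner x (M *ᵥ y) = qinner x (b j0) * qinner (b j0) y := by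
    intro x y
    simp only [qinner, dotProduct, Pi.star_apply]
    rw [Finset.sum_mul]
    refine Finset.sum_congr rfl fun k _ => ?_
    rw [show (M *ᵥ y) k = b j0 k * (∑ l, star (b j0 l) * y l) from hMv y k]
    ring
  refine ⟨M, Matrix.PosSemidef.of_dotProduct_mulVec_nonneg ?_ ?_, ?_, ?_⟩
  · -- Hermitian
    ext k l
    simp only [Matrix.conjTranspose_apply, hM, Matrix.of_apply, star_mul', star_star]
    ring
  · -- nonneg
    intro x
    have h := hfact x x
    have h2 : qinner x (b j0) = star (qinner (b j0) x) := qinner_conj _ _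
    have : star x ⬝ᵥ (M *ᵥ x) = star (qinner (b j0) x) * qinner (b j0) x := by
      rw [← h2, ← h]; rfl
    rw [this]
    exact star_mul_self_nonneg _
  · -- trace
    have h : qinner (b j0) (b j0) = 1 := by rw [hb j0 j0, if_pos rfl]
    simp only [qinner, dotProduct, Pi.star_apply] at h
    simp only [Matrix.trace, Matrix.diag, hM, Matrix.of_apply]
    rw [← h]
    exact Finset.sum_congr rfl fun k _ => by ring
  · -- value
    have hpb : ∀ j, probB M b j = if j = j0 then 1 else 0 := by
      intro j
      rw [probB, hfact (b j) (b j), hb j j0, hb j0 j]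
      rcases eq_or_ne j j0 with h | h
      · simp [h]
      · simp [h, Ne.symm h]
    have hr : ∀ i, probB M a i = ‖qinner (a i) (b j0)‖ ^ 2 := by
      intro i
      rw [probB, hfact (a i) (a i), qinner_conj (a i) (b j0)]
      rw [show qinner (a i) (b j0) * star (qinner (a i) (b j0))
            = (Complex.normSq (qinner (a i) (b j0)) : ℂ) from by
          rw [Complex.star_def, Complex.mul_conj]]
      rw [Complex.ofReal_re, ← Complex.sq_norm]
    have hq0 : probAB M a b j0 = 1 / m := by
      rw [probAB, ← Finset.sum_filter_add_sum_filter_not Finset.univ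
        (fun i : Fin d => (i : ℕ) < dc)]
      have z1 : ∑ i ∈ Finset.filter (fun i : Fin d => (i : ℕ) < dc) Finset.univ,
          probB M a i * ‖qinner (a i) (b j0)‖ ^ 2 = 0 := by
        apply Finset.sum_eq_zero; intro i hi
        have hi' : (i : ℕ) < dc := by simpa using hi
        have hij : i ≠ j0 := fun h => by rw [h] at hi'; simp [hj0] at hi'
        rw [hcomm i j0 (Or.inl hi'), if_neg hij]
        ring
      have hcard : (Finset.filter (fun i : Fin d => ¬ (i : ℕ) < dc) Finset.univ).card
          = d - dc := by
        have h1' : Finset.filter (fun i : Fin d => ¬ (i : ℕ) < dc) Finset.univ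
            = (Finset.Iio j0)ᶜ := by
          ext i
          simp [Fin.lt_def, hj0]
        rw [h1', Finset.card_compl, Fin.card_Iio]
        simp [hj0]
      have z2 : ∑ i ∈ Finset.filter (fun i : Fin d => ¬ (i : ℕ) < dc) Finset.univ,
          probB M a i * ‖qinner (a i) (b j0)‖ ^ 2 = 1 / m := by
        have h : ∀ i ∈ Finset.filter (fun i : Fin d => ¬ (i : ℕ) < dc) Finset.univ,
            probB M a i * ‖qinner (a i) (b j0)‖ ^ 2 = 1 / m ^ 2 := by
          intro i hi
          have hi' : dc ≤ (i : ℕ) := by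
            have := by simpa using hi
            omega
          rw [hr i, hmub i j0 hi' (by simp [hj0]), div_pow, one_pow, Real.sq_sqrt hm0.le]
          rw [div_mul_div_comm, one_mul, ← pow_two]
        rw [Finset.sum_congr rfl h, Finset.sum_const, hcard, nsmul_eq_mul]
        have hcast : ((d - dc : ℕ) : ℝ) = m := by
          rw [hm, Nat.cast_sub hdc.le]
        rw [hcast]
        field_simp
      rw [z1, z2, zero_add]
    have hF : ∑ j, Real.sqrt (probB M b j * probAB M a b j) = Real.sqrt (1 / m) := by
      rw [Finset.sum_eq_single j0]
      · rw [hpb j0, if_pos rfl, hq0, one_mul]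
      · intro j _ hj
        rw [hpb j, if_neg hj, zero_mul, Real.sqrt_zero]
      · intro h; exact absurd (Finset.mem_univ j0) h
    rw [hF, Real.sq_sqrt (by positivity)]

lemma QF_sSup {d dc : ℕ} (hdc : dc < d) (a b : Fin d → (Fin d → ℂ))
    (ha : IsONB a) (hb : IsONB b)
    (hcomm : ∀ i j : Fin d, (i.val < dc ∨ j.val < dc) →
      ‖qinner (a i) (b j)‖ = if i = j then 1 else 0)
    (hmub : ∀ i j : Fin d, dc ≤ i.val → dc ≤ j.val →
      ‖qinner (a i) (b j)‖ = 1 / Real.sqrt ((d : ℝ) - dc)) :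
    sSup (QFset a b) = 1 - 1 / ((d : ℝ) - dc) :=
  IsGreatest.csSup_eq ⟨QF_witness hdc a b ha hb hcomm hmub,
    QF_upper_bound hdc a b ha hb hcomm hmub⟩

theorem QF_commuting_subspace {d dc : ℕ} (hdc : dc < d) (a b : Fin d → (Fin d → ℂ))
    (ha : IsONB a) (hb : IsONB b)
    (hcomm : ∀ i j : Fin d, (i.val < dc ∨ j.val < dc) →
      ‖qinner (a i) (b j)‖ = if i = j then 1 else 0)
    (hmub : ∀ i j : Fin d, dc ≤ i.val → dc ≤ j.val →
      ‖qinner (a i) (b j)‖ = 1 / Real.sqrt ((d : ℝ) - dc)) :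
    (1 / 4) * (sSup (QFset a b) + sSup (QFset b a))
      = (1 / 2) * (1 - 1 / ((d : ℝ) - dc)) := by
  have hcomm' : ∀ i j : Fin d, (i.val < dc ∨ j.val < dc) →
      ‖qinner (b i) (a j)‖ = if i = j then 1 else 0 := by
    intro i j h
    rw [qinner_conj, norm_star, hcomm j i h.symm]
    simp [eq_comm]
  have hmub' : ∀ i j : Fin d, dc ≤ i.val → dc ≤ j.val →
      ‖qinner (b i) (a j)‖ = 1 / Real.sqrt ((d : ℝ) - dc) := by
    intro i j hi hj
    rw [qinner_conj, norm_star]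
    exact hmub j i hj hi
  rw [QF_sSup hdc a b ha hb hcomm hmub, QF_sSup hdc b a hb ha hcomm' hmub']
  ring
end
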